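/- (Perturbed consensus) Let Assumptions on the network and weights hold (network connectivity with window Q and doubly stochastic weight matrices with entries bounded below by η on edges). For each i ∈ V let {θ_i(k)} ⊆ ℝ^d be generated by θ_i(k+1) = ∑_{j=1}^m [W(k)]_{ij} θ_j(k) + ε_i(k) for all k ≥ 0, where ε_i(k) ∈ ℝ^d. Suppose there exists a nonnegative non-increasing scalar sequence {α_k} such that ∑_{k=0}^∞ α_k ‖ε_i(k)‖ < ∞ for all i ∈ V. Then ∑_{k=0}^∞ α_k ‖θ_i(k) − θ_j(k)‖ < ∞ for all i, j ∈ V. -/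

import Mathlib

/-- Backward product of the weight matrices: `prodW W s n = W (s+n-1) * ⋯ * W s`. -/
def prodW {m : ℕ} (W : ℕ → Matrix (Fin m) (Fin m) ℝ) (s : ℕ) : ℕ → Matrix (Fin m) (Fin m) ℝ
  | 0 => 1
  | n + 1 => W (s + n) * prodW W s n

lemma prodW_nonneg {m : ℕ} (W : ℕ → Matrix (Fin m) (Fin m) ℝ)
    (hW0 : ∀ k i j, 0 ≤ W k i j) (s n : ℕ) (i j : Fin m) : 0 ≤ prodW W s n i j := by
  induction n generalizing i j with
  | zero =>
    simp only [prodW, Matrix.one_apply]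
    split_ifs <;> norm_num
  | succ n ih =>
    simp only [prodW, Matrix.mul_apply]
    exact Finset.sum_nonneg fun l _ => mul_nonneg (hW0 _ _ _) (ih _ _)

lemma prodW_row {m : ℕ} (W : ℕ → Matrix (Fin m) (Fin m) ℝ)
    (hrow : ∀ k i, ∑ j, W k i j = 1) (s n : ℕ) (i : Fin m) :
    ∑ j, prodW W s n i j = 1 := by
  induction n generalizing i with
  | zero => simp [prodW, Matrix.one_apply]
  | succ n ih =>
    simp only [prodW, Matrix.mul_apply]
    rw [Finset.sum_comm]
    calc ∑ l, ∑ j, W (s + n) i l * prodW W s n l j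
        = ∑ l, W (s + n) i l * ∑ j, prodW W s n l j := by
          simp [Finset.mul_sum]
      _ = 1 := by simp only [ih]; simpa using hrow (s + n) i

lemma crossing {α : Type*} (R : α → α → Prop) (S : α → Prop) :
    ∀ a b : α, Relation.ReflTransGen R a b → ¬ S a → S b →
      ∃ u w, R u w ∧ ¬ S u ∧ S w := by
  intro a b h
  induction h using Relation.ReflTransGen.head_induction_on with
  | refl => intro h1 h2; exact absurd h2 h1
  | @head u c hR _ ih =>
    intro ha hb
    by_cases hc : S c
    · exact ⟨u, c, hR, ha, hc⟩
    · exact ih hc hb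

open Classical in
lemma prodW_pos {m : ℕ} (hm : 0 < m)
    (Ed : ℕ → Fin m → Fin m → Prop)
    (W : ℕ → Matrix (Fin m) (Fin m) ℝ)
    (hself : ∀ k i, Ed k i i)
    (hW0 : ∀ k i j, 0 ≤ W k i j)
    (η : ℝ) (hη0 : 0 < η)
    (hWη : ∀ k i j, Ed k i j → η ≤ W k i j)
    (Q : ℕ) (hQ : 1 ≤ Q)
    (hconn : ∀ k, ∀ i j : Fin m,
      Relation.ReflTransGen (fun u w => ∃ ℓ < Q, Ed (k + ℓ) u w) i j)
    (s : ℕ) (i j : Fin m) : η ^ (m * Q) ≤ prodW W s (m * Q) i j := by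
  -- the set of nodes reached from j with weight at least η^n after n steps
  set P : ℕ → Fin m → Prop := fun n i => η ^ n ≤ prodW W s n i j with hP
  set S : ℕ → Finset (Fin m) := fun n => Finset.univ.filter (fun i => P n i) with hS
  have hedge : ∀ n u w, Ed (s + n) u w → P n w → P (n + 1) u := by
    intro n u w he hw
    show η ^ (n + 1) ≤ prodW W s (n + 1) u j
    have : prodW W s (n+1) u j = ∑ l, W (s + n) u l * prodW W s n l j := by
      simp [prodW, Matrix.mul_apply]
    rw [this]
    calc η ^ (n+1) = η * η ^ n := by ring
      _ ≤ W (s + n) u w * prodW W s n w j := by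
          apply mul_le_mul (hWη _ _ _ he) hw (by positivity) (hW0 _ _ _)
      _ ≤ ∑ l, W (s + n) u l * prodW W s n l j := by
          apply Finset.single_le_sum (f := fun l => W (s + n) u l * prodW W s n l j)
            (fun l _ => mul_nonneg (hW0 _ _ _) (prodW_nonneg W hW0 _ _ _ _)) (Finset.mem_univ w)
  have hstep : ∀ n u, P n u → P (n + 1) u := fun n u hu => hedge n u u (hself _ _) hu
  have hmono : ∀ n n', n ≤ n' → ∀ u, P n u → P n' u := by
    intro n n' hle
    induction n' with
    | zero => intro u hu; exact (Nat.le_zero.mp hle) ▸ hu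
    | succ n' ih =>
      rcases Nat.lt_or_ge n (n' + 1) with h | h
      · intro u hu; exact hstep n' u (ih (Nat.lt_succ_iff.mp h) u hu)
      · intro u hu; have : n = n' + 1 := le_antisymm hle h; exact this ▸ hu
  have hPj : ∀ n, P n j := by
    intro n
    induction n with
    | zero => show η ^ 0 ≤ prodW W s 0 j j; simp [prodW, Matrix.one_apply]
    | succ n ih => exact hstep n j ih
  have hSmono : ∀ n n', n ≤ n' → S n ⊆ S n' := by
    intro n n' hle u hu
    simp only [hS, Finset.mem_filter, Finset.mem_univ, true_and] at hu ⊢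
    exact hmono n n' hle u hu
  have hgrow : ∀ n, S n ≠ Finset.univ → (S n).card + 1 ≤ (S (n + Q)).card := by
    intro n hne
    obtain ⟨a, ha⟩ : ∃ a, a ∉ S n := by
      by_contra h
      push_neg at h
      exact hne (Finset.eq_univ_iff_forall.mpr h)
    have hcr := crossing (fun u w => ∃ ℓ < Q, Ed (s + n + ℓ) u w) (fun u => u ∈ S n)
      a j (hconn (s + n) a j) ha
      (by simp [hS, Finset.mem_filter]; exact hPj n)
    obtain ⟨u, w, ⟨ℓ, hℓ, he⟩, hu, hw⟩ := hcr
    have hwP : P n w := by simpa [hS, Finset.mem_filter] using hw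
    have huP : P (n + ℓ + 1) u := by
      have : P (n + ℓ) w := hmono n (n + ℓ) (Nat.le_add_right _ _) w hwP
      have he' : Ed (s + (n + ℓ)) u w := by rwa [← Nat.add_assoc]
      exact hedge (n + ℓ) u w he' this
    have huS : u ∈ S (n + Q) := by
      simp only [hS, Finset.mem_filter, Finset.mem_univ, true_and]
      exact hmono (n + ℓ + 1) (n + Q) (by omega) u huP
    have hss : S n ⊂ S (n + Q) := by
      constructor
      · exact hSmono n (n + Q) (by omega)
      · intro hsub
        exact hu (hsub huS)
    exact Finset.card_lt_card hss
  have hcard_le : ∀ n, (S n).card ≤ m := fun n => by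
    simpa using Finset.card_le_card (Finset.subset_univ (S n))
  have main : ∀ t, min m (t + 1) ≤ (S (t * Q)).card := by
    intro t
    induction t with
    | zero =>
      have hj : j ∈ S (0 * Q) := by
        simp only [Nat.zero_mul, hS, Finset.mem_filter, Finset.mem_univ, true_and]
        exact hPj 0
      have h1 := Finset.card_pos.mpr ⟨j, hj⟩
      exact le_trans (min_le_right m 1) h1
    | succ t ih =>
      by_cases h : S (t * Q) = Finset.univ
      · have : (S ((t+1) * Q)).card = m := by
          have h2 : S ((t+1)*Q) = Finset.univ :=
            Finset.univ_subset_iff.mp (h ▸ hSmono (t*Q) ((t+1)*Q) (by nlinarith))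
          simp [h2]
        omega
      · have h1 := hgrow (t * Q) h
        have h2 : t * Q + Q = (t + 1) * Q := by ring
        rw [h2] at h1
        have h3 : (S (t * Q)).card < m := by
          rcases lt_or_eq_of_le (hcard_le (t * Q)) with h' | h'
          · exact h'
          · exfalso
            exact h (Finset.eq_univ_of_card _ (by simpa using h'))
        omega
  have hfin : S (m * Q) = Finset.univ := by
    have := main m
    have := hcard_le (m * Q)
    apply Finset.eq_univ_of_card
    simp only [Fintype.card_fin]
    omega
  have : i ∈ S (m * Q) := hfin ▸ Finset.mem_univ i
  simpa [hS, Finset.mem_filter] using this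

/-- Difference of two convex-type combinations, with all coefficients ≥ δ,
is bounded by `(1 - m δ) D` where `D` bounds pairwise distances. -/
lemma convex_diff_bound {m : ℕ} {E : Type*} [NormedAddCommGroup E] [NormedSpace ℝ E]
    (a b : Fin m → ℝ) (v : Fin m → E) (δ D : ℝ) (hD : 0 ≤ D)
    (ha0 : ∀ l, δ ≤ a l) (hb0 : ∀ l, δ ≤ b l)
    (ha1 : ∑ l, a l = 1) (hb1 : ∑ l, b l = 1)
    (hvd : ∀ l l', ‖v l - v l'‖ ≤ D) :
    ‖(∑ l, a l • v l) - ∑ l, b l • v l‖ ≤ (1 - m * δ) * D := by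
  set c : Fin m → ℝ := fun l => a l - δ with hc
  set c' : Fin m → ℝ := fun l => b l - δ with hc'
  have hc0 : ∀ l, 0 ≤ c l := fun l => sub_nonneg.mpr (ha0 l)
  have hc'0 : ∀ l, 0 ≤ c' l := fun l => sub_nonneg.mpr (hb0 l)
  set s : ℝ := 1 - m * δ with hs
  have hcs : ∑ l, c l = s := by simp [hc, Finset.sum_sub_distrib, ha1, hs]
  have hc's : ∑ l, c' l = s := by simp [hc', Finset.sum_sub_distrib, hb1, hs]
  have hs0 : 0 ≤ s := hcs ▸ Finset.sum_nonneg fun l _ => hc0 l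
  have hdiff : (∑ l, a l • v l) - ∑ l, b l • v l = (∑ l, c l • v l) - ∑ l, c' l • v l := by
    simp only [hc, hc', sub_smul, Finset.sum_sub_distrib]
    abel
  rw [hdiff]
  set u : E := (∑ l, c l • v l) - ∑ l, c' l • v l with hu
  rcases eq_or_lt_of_le hs0 with hs0' | hs0'
  · have hcz : ∀ l, c l = 0 := by
      intro l
      have := Finset.sum_eq_zero_iff_of_nonneg (fun l _ => hc0 l) |>.mp (hcs ▸ hs0'.symm)
      exact this l (Finset.mem_univ l)
    have hc'z : ∀ l, c' l = 0 := by
      intro l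
      have := Finset.sum_eq_zero_iff_of_nonneg (fun l _ => hc'0 l) |>.mp (hc's ▸ hs0'.symm)
      exact this l (Finset.mem_univ l)
    have : u = 0 := by simp [hu, hcz, hc'z]
    rw [this]
    simp
    positivity
  · -- s > 0 : show s • u = double sum, bound norm
    have key : s • u = ∑ l, ∑ l', (c l * c' l') • (v l - v l') := by
      have h1 : s • (∑ l, c l • v l) = ∑ l, ∑ l', (c l * c' l') • v l := by
        rw [Finset.smul_sum]
        apply Finset.sum_congr rfl
        intro l _
        rw [← hc's, Finset.sum_smul]
        · apply Finset.sum_congr rfl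
          intro l' _
          rw [smul_smul, mul_comm (c' l') (c l)]
      have h2 : s • (∑ l', c' l' • v l') = ∑ l, ∑ l', (c l * c' l') • v l' := by
        rw [Finset.smul_sum]
        rw [Finset.sum_comm]
        apply Finset.sum_congr rfl
        intro l' _
        rw [← hcs, Finset.sum_smul]
        apply Finset.sum_congr rfl
        intro l _
        rw [smul_smul]
      rw [hu, smul_sub, h1, h2, ← Finset.sum_sub_distrib]
      apply Finset.sum_congr rfl
      intro l _
      rw [← Finset.sum_sub_distrib]
      apply Finset.sum_congr rfl
      intro l' _
      rw [smul_sub]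
    have hnorm : s * ‖u‖ ≤ s * s * D := by
      have h3 : ‖s • u‖ ≤ s * s * D := by
        rw [key]
        calc ‖∑ l, ∑ l', (c l * c' l') • (v l - v l')‖
            ≤ ∑ l, ∑ l', ‖(c l * c' l') • (v l - v l')‖ := by
              apply le_trans (norm_sum_le _ _)
              apply Finset.sum_le_sum
              intro l _
              exact norm_sum_le _ _
          _ ≤ ∑ l, ∑ l', (c l * c' l') * D := by
              apply Finset.sum_le_sum; intro l _
              apply Finset.sum_le_sum; intro l' _
              rw [norm_smul, Real.norm_eq_abs, abs_of_nonneg (mul_nonneg (hc0 l) (hc'0 l'))]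
              exact mul_le_mul_of_nonneg_left (hvd l l') (mul_nonneg (hc0 l) (hc'0 l'))
          _ = s * s * D := by
              have inner : ∀ l : Fin m, ∑ l', c l * c' l' * D = c l * (s * D) := by
                intro l
                calc ∑ l', c l * c' l' * D = c l * ∑ l', c' l' * D := by
                      rw [Finset.mul_sum]
                      apply Finset.sum_congr rfl
                      intro l' _
                      ring
                  _ = c l * (s * D) := by rw [← Finset.sum_mul, hc's]
              rw [Finset.sum_congr rfl (fun l _ => inner l), ← Finset.sum_mul, hcs]
              ring
      calc s * ‖u‖ = ‖s • u‖ := by rw [norm_smul, Real.norm_eq_abs, abs_of_nonneg (le_of_lt hs0')]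
        _ ≤ s * s * D := h3
    have := (mul_le_mul_iff_right₀ hs0').mp (by linarith [hnorm] : s * ‖u‖ ≤ s * (s * D))
    linarith

/-- Convex combination norm bound. -/
lemma convex_norm_bound {m : ℕ} {E : Type*} [NormedAddCommGroup E] [NormedSpace ℝ E]
    (c : Fin m → ℝ) (v : Fin m → E) (M : ℝ)
    (hc0 : ∀ l, 0 ≤ c l) (hc1 : ∑ l, c l = 1) (hv : ∀ l, ‖v l‖ ≤ M) :
    ‖∑ l, c l • v l‖ ≤ M := by
  calc ‖∑ l, c l • v l‖ ≤ ∑ l, ‖c l • v l‖ := norm_sum_le _ _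
    _ ≤ ∑ l, c l * M := by
        apply Finset.sum_le_sum; intro l _
        rw [norm_smul, Real.norm_eq_abs, abs_of_nonneg (hc0 l)]
        exact mul_le_mul_of_nonneg_left (hv l) (hc0 l)
    _ = M := by rw [← Finset.sum_mul, hc1, one_mul]

/-- Solution bound for a scalar linear recursion. -/
lemma lin_rec_bound (lam : ℝ) (hlam : 0 ≤ lam) (x u : ℕ → ℝ)
    (hrec : ∀ k, x (k + 1) ≤ lam * x k + u k) :
    ∀ k, x k ≤ lam ^ k * x 0 + ∑ l ∈ Finset.range k, lam ^ (k - 1 - l) * u l := by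
  intro k
  induction k with
  | zero => simp
  | succ k ih =>
    calc x (k + 1) ≤ lam * x k + u k := hrec k
      _ ≤ lam * (lam ^ k * x 0 + ∑ l ∈ Finset.range k, lam ^ (k - 1 - l) * u l) + u k := by
          have := mul_le_mul_of_nonneg_left ih hlam
          linarith
      _ = lam ^ (k+1) * x 0 + ∑ l ∈ Finset.range (k+1), lam ^ (k - l) * u l := by
          rw [Finset.sum_range_succ, Nat.sub_self, pow_zero, one_mul, mul_add, Finset.mul_sum]
          have hsum : ∀ l ∈ Finset.range k,
              lam * (lam ^ (k - 1 - l) * u l) = lam ^ (k - l) * u l := by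
            intro l hl
            have h : k - l = (k - 1 - l) + 1 := by
              have := Finset.mem_range.mp hl; omega
            rw [h, pow_succ]
            ring
          rw [Finset.sum_congr rfl hsum, pow_succ]
          ring
      _ = lam ^ (k+1) * x 0 + ∑ l ∈ Finset.range (k+1), lam ^ (k + 1 - 1 - l) * u l := by
          norm_num

/-- Bound for the double (convolution) sum. -/
lemma conv_sum_bound (lam : ℝ) (h0 : 0 ≤ lam) (h1 : lam < 1) (Tf : ℕ → ℝ)
    (hT : ∀ l, 0 ≤ Tf l) (Tb : ℝ) (hTb : ∀ K, ∑ l ∈ Finset.range K, Tf l ≤ Tb) :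
    ∀ K, ∑ k ∈ Finset.range K, ∑ l ∈ Finset.range k, lam ^ (k - 1 - l) * Tf l
      ≤ Tb / (1 - lam) := by
  set G : ℕ → ℝ := fun k => ∑ l ∈ Finset.range k, lam ^ (k - 1 - l) * Tf l with hG
  have hG0 : ∀ k, 0 ≤ G k := fun k =>
    Finset.sum_nonneg fun l _ => mul_nonneg (pow_nonneg h0 _) (hT l)
  have hGrec : ∀ k, G (k + 1) = lam * G k + Tf k := by
    intro k
    simp only [hG]
    rw [Finset.sum_range_succ, Nat.add_sub_cancel, Nat.sub_self, pow_zero, one_mul,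
      Finset.mul_sum]
    congr 1
    apply Finset.sum_congr rfl
    intro l hl
    have : k - l = (k - 1 - l) + 1 := by
      have := Finset.mem_range.mp hl; omega
    rw [this, pow_succ]
    ring
  set H : ℕ → ℝ := fun K => ∑ k ∈ Finset.range K, G k with hH
  have hHmono : ∀ K, H K ≤ H (K + 1) := by
    intro K
    simp only [hH, Finset.sum_range_succ]
    linarith [hG0 K]
  have key : ∀ K, H (K + 1) = lam * H K + ∑ k ∈ Finset.range K, Tf k := by
    intro K
    show ∑ k ∈ Finset.range (K+1), G k = lam * ∑ k ∈ Finset.range K, G k + _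
    rw [Finset.sum_range_succ' G K]
    rw [Finset.sum_congr rfl (fun k _ => hGrec k), Finset.sum_add_distrib, ← Finset.mul_sum]
    have hG00 : G 0 = 0 := by simp [hG]
    rw [hG00]
    ring
  intro K
  have h2 : H K ≤ lam * H K + Tb := by
    calc H K ≤ H (K + 1) := hHmono K
      _ = lam * H K + ∑ k ∈ Finset.range K, Tf k := key K
      _ ≤ lam * H K + Tb := by linarith [hTb K]
  have h4 : H K * (1 - lam) ≤ Tb := by linarith
  show H K ≤ Tb / (1 - lam)
  exact (le_div_iff₀ (by linarith : (0:ℝ) < 1 - lam)).mpr h4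

/-- Regrouping a sum over `range (K*B)` into blocks. -/
lemma sum_blocks (g : ℕ → ℝ) (B : ℕ) :
    ∀ K, ∑ n ∈ Finset.range (K * B), g n
      = ∑ k ∈ Finset.range K, ∑ r ∈ Finset.range B, g (k * B + r) := by
  intro K
  induction K with
  | zero => simp
  | succ K ih =>
    have h : (K + 1) * B = K * B + B := by ring
    rw [h, Finset.sum_range_add, ih, Finset.sum_range_succ]
theorem perturbed_consensus {d m : ℕ} (hm : 0 < m)
    (Ed : ℕ → Fin m → Fin m → Prop)
    (W : ℕ → Matrix (Fin m) (Fin m) ℝ)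
    (hself : ∀ k i, Ed k i i)
    (hW0 : ∀ k i j, 0 ≤ W k i j)
    (hWsupp : ∀ k i j, ¬ Ed k i j → W k i j = 0)
    (hrow : ∀ k i, ∑ j, W k i j = 1)
    (hcol : ∀ k j, ∑ i, W k i j = 1)
    (η : ℝ) (hη0 : 0 < η) (hη1 : η < 1)
    (hWη : ∀ k i j, Ed k i j → η ≤ W k i j)
    (Q : ℕ) (hQ : 1 ≤ Q)
    (hconn : ∀ k, ∀ i j : Fin m,
      Relation.ReflTransGen (fun u w => ∃ ℓ < Q, Ed (k + ℓ) u w) i j)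
    (θ ε : Fin m → ℕ → EuclideanSpace ℝ (Fin d))
    (hrec : ∀ i k, θ i (k + 1) = (∑ j, W k i j • θ j k) + ε i k)
    (α : ℕ → ℝ) (hα0 : ∀ k, 0 ≤ α k) (hαmono : ∀ k, α (k + 1) ≤ α k)
    (hsum : ∀ i, Summable fun k => α k * ‖ε i k‖) :
    ∀ i j, Summable fun k => α k * ‖θ i k - θ j k‖ := by

  intro i j
  classical
  have hne : Nonempty (Fin m) := ⟨⟨0, hm⟩⟩
  have hαanti : Antitone α := antitone_nat_of_succ_le hαmono
  -- block length and contraction constants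
  set B : ℕ := m * Q with hB
  have hB1 : 1 ≤ B := Nat.mul_pos hm hQ
  set δ : ℝ := η ^ B with hδ
  have hδ0 : 0 < δ := pow_pos hη0 B
  set lam : ℝ := 1 - (m : ℝ) * δ with hlam
  have hΦpos : ∀ s a b, δ ≤ prodW W s B a b := fun s a b =>
    prodW_pos hm Ed W hself hW0 η hη0 hWη Q hQ hconn s a b
  have hΦ0 : ∀ s n a b, 0 ≤ prodW W s n a b := fun s n a b => prodW_nonneg W hW0 s n a b
  have hΦrow : ∀ s n a, ∑ b, prodW W s n a b = 1 := fun s n a => prodW_row W hrow s n a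
  have hmδ1 : (m : ℝ) * δ ≤ 1 := by
    have h1 := hΦrow 0 B ⟨0, hm⟩
    calc (m : ℝ) * δ = ∑ _b : Fin m, δ := by simp [mul_comm]
      _ ≤ ∑ b, prodW W 0 B ⟨0, hm⟩ b := Finset.sum_le_sum fun b _ => hΦpos _ _ _
      _ = 1 := h1
  have hlam0 : 0 ≤ lam := by rw [hlam]; linarith
  have hlam1 : lam < 1 := by
    have hm' : (0 : ℝ) < (m : ℝ) := Nat.cast_pos.mpr hm
    rw [hlam]; nlinarith
  -- diameter and noise magnitude
  have huniv : (Finset.univ : Finset (Fin m × Fin m)).Nonempty := Finset.univ_nonempty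
  set D : ℕ → ℝ := fun n =>
    Finset.univ.sup' huniv (fun p : Fin m × Fin m => ‖θ p.1 n - θ p.2 n‖) with hD
  have hDle : ∀ n (a b : Fin m), ‖θ a n - θ b n‖ ≤ D n := fun n a b =>
    Finset.le_sup' (fun p : Fin m × Fin m => ‖θ p.1 n - θ p.2 n‖) (Finset.mem_univ (a, b))
  have hD0 : ∀ n, 0 ≤ D n := fun n => by simpa using hDle n i i
  have hDsup : ∀ n M, (∀ a b : Fin m, ‖θ a n - θ b n‖ ≤ M) → D n ≤ M := fun n M h =>
    Finset.sup'_le _ _ fun p _ => h p.1 p.2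
  set e : ℕ → ℝ := fun t => ∑ l, ‖ε l t‖ with he
  have he0 : ∀ t, 0 ≤ e t := fun t => Finset.sum_nonneg fun l _ => norm_nonneg _
  have heall : ∀ t (l : Fin m), ‖ε l t‖ ≤ e t := fun t l =>
    Finset.single_le_sum (fun l' _ => norm_nonneg (ε l' t)) (Finset.mem_univ l)
  -- one-step diameter bound
  have key1 : ∀ n, D (n + 1) ≤ D n + 2 * e n := by
    intro n
    apply hDsup
    intro a b
    have hdiffeq : θ a (n + 1) - θ b (n + 1)
        = ((∑ l, W n a l • θ l n) - ∑ l, W n b l • θ l n) + (ε a n - ε b n) := by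
      rw [hrec a n, hrec b n]; abel
    rw [hdiffeq]
    have h1 : ‖(∑ l, W n a l • θ l n) - ∑ l, W n b l • θ l n‖ ≤ (1 - (m : ℝ) * 0) * D n :=
      convex_diff_bound (W n a) (W n b) (fun l => θ l n) 0 (D n) (hD0 n)
        (fun l => hW0 n a l) (fun l => hW0 n b l) (hrow n a) (hrow n b)
        (fun l l' => hDle n l l')
    have h2 : ‖ε a n - ε b n‖ ≤ 2 * e n := by
      calc ‖ε a n - ε b n‖ ≤ ‖ε a n‖ + ‖ε b n‖ := norm_sub_le _ _
        _ ≤ 2 * e n := by linarith [heall n a, heall n b]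
    calc ‖((∑ l, W n a l • θ l n) - ∑ l, W n b l • θ l n) + (ε a n - ε b n)‖
        ≤ ‖(∑ l, W n a l • θ l n) - ∑ l, W n b l • θ l n‖ + ‖ε a n - ε b n‖ := norm_add_le _ _
      _ ≤ D n + 2 * e n := by
          have := h1; simp only [Nat.cast_ofNat, mul_zero, sub_zero, one_mul] at this; linarith
  -- representation error bound
  have key2 : ∀ s n (a : Fin m),
      ‖θ a (s + n) - ∑ l, prodW W s n a l • θ l s‖ ≤ ∑ t ∈ Finset.range n, e (s + t) := by
    intro s n
    induction n with
    | zero =>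
      intro a
      have : (∑ l, prodW W s 0 a l • θ l s) = θ a s := by
        simp [prodW, Matrix.one_apply]
      simp [this]
    | succ n ih =>
      intro a
      have hθ : θ a (s + (n + 1)) = (∑ l, W (s + n) a l • θ l (s + n)) + ε a (s + n) := by
        rw [show s + (n + 1) = (s + n) + 1 from rfl, hrec a (s + n)]
      have hΦexp : (∑ l, prodW W s (n + 1) a l • θ l s)
          = ∑ l', W (s + n) a l' • ∑ l, prodW W s n l' l • θ l s := by
        simp only [prodW, Matrix.mul_apply, Finset.sum_smul, Finset.smul_sum, mul_smul]
        rw [Finset.sum_comm]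
      have hdiffeq : θ a (s + (n + 1)) - ∑ l, prodW W s (n + 1) a l • θ l s
          = (∑ l', W (s + n) a l' • (θ l' (s + n) - ∑ l, prodW W s n l' l • θ l s))
            + ε a (s + n) := by
        rw [hθ, hΦexp]
        rw [show (∑ l', W (s + n) a l' • (θ l' (s + n) - ∑ l, prodW W s n l' l • θ l s))
            = (∑ l', W (s + n) a l' • θ l' (s + n))
              - ∑ l', W (s + n) a l' • ∑ l, prodW W s n l' l • θ l s by
          rw [← Finset.sum_sub_distrib]
          apply Finset.sum_congr rfl
          intro l' _
          rw [smul_sub]]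
        abel
      rw [hdiffeq]
      calc ‖(∑ l', W (s + n) a l' • (θ l' (s + n) - ∑ l, prodW W s n l' l • θ l s))
            + ε a (s + n)‖
          ≤ ‖∑ l', W (s + n) a l' • (θ l' (s + n) - ∑ l, prodW W s n l' l • θ l s)‖
            + ‖ε a (s + n)‖ := norm_add_le _ _
        _ ≤ (∑ t ∈ Finset.range n, e (s + t)) + e (s + n) := by
            have hcb := convex_norm_bound (W (s + n) a)
              (fun l' => θ l' (s + n) - ∑ l, prodW W s n l' l • θ l s)
              (∑ t ∈ Finset.range n, e (s + t))
              (fun l => hW0 _ _ _) (hrow (s + n) a) (fun l' => ih l')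
            linarith [heall (s + n) a]
        _ = ∑ t ∈ Finset.range (n + 1), e (s + t) := (Finset.sum_range_succ _ n).symm
  -- block contraction
  have key4 : ∀ s, D (s + B) ≤ lam * D s + 2 * ∑ t ∈ Finset.range B, e (s + t) := by
    intro s
    apply hDsup
    intro a b
    set ψ : Fin m → EuclideanSpace ℝ (Fin d) := fun x => ∑ l, prodW W s B x l • θ l s with hψ
    set M : ℝ := ∑ t ∈ Finset.range B, e (s + t) with hM
    have h1 : ‖θ a (s + B) - ψ a‖ ≤ M := key2 s B a
    have h2 : ‖θ b (s + B) - ψ b‖ ≤ M := key2 s B b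
    have h3 : ‖ψ a - ψ b‖ ≤ lam * D s := by
      have := convex_diff_bound (prodW W s B a) (prodW W s B b) (fun l => θ l s) δ (D s)
        (hD0 s) (fun l => hΦpos s a l) (fun l => hΦpos s b l) (hΦrow s B a) (hΦrow s B b)
        (fun l l' => hDle s l l')
      simpa [hψ, hlam] using this
    calc ‖θ a (s + B) - θ b (s + B)‖
        = ‖(θ a (s + B) - ψ a) + (ψ a - ψ b) + (ψ b - θ b (s + B))‖ := by
          congr 1; abel
      _ ≤ ‖(θ a (s + B) - ψ a) + (ψ a - ψ b)‖ + ‖ψ b - θ b (s + B)‖ := norm_add_le _ _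
      _ ≤ ‖θ a (s + B) - ψ a‖ + ‖ψ a - ψ b‖ + ‖ψ b - θ b (s + B)‖ := by
          linarith [norm_add_le (θ a (s + B) - ψ a) (ψ a - ψ b)]
      _ ≤ M + lam * D s + M := by
          have h2' : ‖ψ b - θ b (s + B)‖ ≤ M := by rwa [norm_sub_rev]
          linarith
      _ = lam * D s + 2 * M := by ring
  -- block sequence
  set x : ℕ → ℝ := fun k => D (k * B) with hx
  set u : ℕ → ℝ := fun k => 2 * ∑ t ∈ Finset.range B, e (k * B + t) with hu
  have hxu : ∀ k, x (k + 1) ≤ lam * x k + u k := by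
    intro k
    have h := key4 (k * B)
    have heq : (k + 1) * B = k * B + B := by ring
    simp only [hx, hu, heq]
    exact h
  have hxbound := lin_rec_bound lam hlam0 x u hxu
  -- within-block bound
  have hwithin : ∀ k r, D (k * B + r) ≤ x k + 2 * ∑ t ∈ Finset.range r, e (k * B + t) := by
    intro k r
    induction r with
    | zero => simp [hx]
    | succ r ih =>
      calc D (k * B + (r + 1)) = D ((k * B + r) + 1) := by ring_nf
        _ ≤ D (k * B + r) + 2 * e (k * B + r) := key1 _
        _ ≤ x k + 2 * ∑ t ∈ Finset.range r, e (k * B + t) + 2 * e (k * B + r) := by linarith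
        _ = x k + 2 * ∑ t ∈ Finset.range (r + 1), e (k * B + t) := by
            rw [Finset.sum_range_succ]; ring
  -- noise block sums
  set T : ℕ → ℝ := fun k => ∑ t ∈ Finset.range B, α (k * B + t) * e (k * B + t) with hT
  have hT0 : ∀ k, 0 ≤ T k := fun k =>
    Finset.sum_nonneg fun t _ => mul_nonneg (hα0 _) (he0 _)
  have hTsummable : Summable fun t => α t * e t := by
    have heq : (fun t => α t * e t) = fun t => ∑ l, α t * ‖ε l t‖ := by
      funext t; rw [he, Finset.mul_sum]
    rw [heq]
    exact summable_sum fun l _ => hsum l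
  set Tt : ℝ := ∑' t, α t * e t with hTt
  have hTb : ∀ K, ∑ k ∈ Finset.range K, T k ≤ Tt := by
    intro K
    have h1 : ∑ k ∈ Finset.range K, T k
        = ∑ n ∈ Finset.range (K * B), α n * e n := (sum_blocks (fun n => α n * e n) B K).symm
    rw [h1]
    exact Summable.sum_le_tsum _ (fun n _ => mul_nonneg (hα0 _) (he0 _)) hTsummable
  -- per-term bound
  have hper : ∀ k r, r < B →
      α (k * B + r) * ‖θ i (k * B + r) - θ j (k * B + r)‖
        ≤ α 0 * x 0 * lam ^ k + 2 * (∑ l ∈ Finset.range k, lam ^ (k - 1 - l) * T l)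
          + 2 * T k := by
    intro k r hr
    set A : ℝ := α (k * B + r) with hA
    have hA0 : 0 ≤ A := hα0 _
    have hAα0 : A ≤ α 0 := hαanti (Nat.zero_le _)
    have step0 : A * ‖θ i (k * B + r) - θ j (k * B + r)‖ ≤ A * D (k * B + r) :=
      mul_le_mul_of_nonneg_left (hDle _ i j) hA0
    have step1 : A * D (k * B + r)
        ≤ A * x k + 2 * (A * ∑ t ∈ Finset.range r, e (k * B + t)) := by
      have h := mul_le_mul_of_nonneg_left (hwithin k r) hA0
      calc A * D (k * B + r)
          ≤ A * (x k + 2 * ∑ t ∈ Finset.range r, e (k * B + t)) := h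
        _ = A * x k + 2 * (A * ∑ t ∈ Finset.range r, e (k * B + t)) := by ring
    have step2 : A * ∑ t ∈ Finset.range r, e (k * B + t) ≤ T k := by
      rw [Finset.mul_sum]
      calc ∑ t ∈ Finset.range r, A * e (k * B + t)
          ≤ ∑ t ∈ Finset.range r, α (k * B + t) * e (k * B + t) := by
            apply Finset.sum_le_sum
            intro t ht
            have htr := Finset.mem_range.mp ht
            apply mul_le_mul_of_nonneg_right _ (he0 _)
            exact hαanti (by omega : k * B + t ≤ k * B + r)
        _ ≤ T k := by
            apply Finset.sum_le_sum_of_subset_of_nonneg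
              (Finset.range_subset_range.mpr (le_of_lt hr))
            intro t _ _
            exact mul_nonneg (hα0 _) (he0 _)
    have step3 : A * x k ≤ α 0 * x 0 * lam ^ k
        + 2 * ∑ l ∈ Finset.range k, lam ^ (k - 1 - l) * T l := by
      have h1 : A * x k ≤ A * (lam ^ k * x 0 + ∑ l ∈ Finset.range k, lam ^ (k - 1 - l) * u l) :=
        mul_le_mul_of_nonneg_left (hxbound k) hA0
      have h2 : A * (lam ^ k * x 0) ≤ α 0 * x 0 * lam ^ k := by
        have : A * (lam ^ k * x 0) ≤ α 0 * (lam ^ k * x 0) :=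
          mul_le_mul_of_nonneg_right hAα0 (mul_nonneg (pow_nonneg hlam0 _) (hD0 _))
        linarith [this]
      have h3 : ∀ l ∈ Finset.range k, A * (lam ^ (k - 1 - l) * u l)
          ≤ lam ^ (k - 1 - l) * (2 * T l) := by
        intro l hl
        have hlk := Finset.mem_range.mp hl
        have hAul : A * u l ≤ 2 * T l := by
          rw [hu, hT]
          rw [show A * (2 * ∑ t ∈ Finset.range B, e (l * B + t))
              = 2 * ∑ t ∈ Finset.range B, A * e (l * B + t) by
            calc A * (2 * ∑ t ∈ Finset.range B, e (l * B + t))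
                = 2 * (A * ∑ t ∈ Finset.range B, e (l * B + t)) := by ring
              _ = 2 * ∑ t ∈ Finset.range B, A * e (l * B + t) := by rw [Finset.mul_sum]]
          have : ∑ t ∈ Finset.range B, A * e (l * B + t)
              ≤ ∑ t ∈ Finset.range B, α (l * B + t) * e (l * B + t) := by
            apply Finset.sum_le_sum
            intro t ht
            apply mul_le_mul_of_nonneg_right _ (he0 _)
            apply hαanti
            have h4 : l * B + t < (l + 1) * B := by
              have := Finset.mem_range.mp ht; nlinarith
            have h5 : (l + 1) * B ≤ k * B := Nat.mul_le_mul_right B hlk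
            omega
          linarith
        calc A * (lam ^ (k - 1 - l) * u l) = lam ^ (k - 1 - l) * (A * u l) := by ring
          _ ≤ lam ^ (k - 1 - l) * (2 * T l) := by
              apply mul_le_mul_of_nonneg_left hAul (pow_nonneg hlam0 _)
      calc A * x k ≤ A * (lam ^ k * x 0) + ∑ l ∈ Finset.range k, A * (lam ^ (k - 1 - l) * u l) := by
            rw [mul_add, Finset.mul_sum] at h1; exact h1
        _ ≤ α 0 * x 0 * lam ^ k + ∑ l ∈ Finset.range k, lam ^ (k - 1 - l) * (2 * T l) := by
            have := Finset.sum_le_sum h3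
            linarith
        _ = α 0 * x 0 * lam ^ k + 2 * ∑ l ∈ Finset.range k, lam ^ (k - 1 - l) * T l := by
            rw [Finset.mul_sum]
            congr 1
            apply Finset.sum_congr rfl; intro l _; ring
    calc A * ‖θ i (k * B + r) - θ j (k * B + r)‖
        ≤ A * x k + 2 * (A * ∑ t ∈ Finset.range r, e (k * B + t)) := le_trans step0 step1
      _ ≤ (α 0 * x 0 * lam ^ k + 2 * ∑ l ∈ Finset.range k, lam ^ (k - 1 - l) * T l)
          + 2 * T k := by linarith
      _ = _ := by ring
  -- final summability
  have hgeo : ∀ K : ℕ, ∑ k ∈ Finset.range K, lam ^ k ≤ (1 - lam)⁻¹ := by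
    intro K
    calc ∑ k ∈ Finset.range K, lam ^ k ≤ ∑' k : ℕ, lam ^ k :=
        Summable.sum_le_tsum _ (fun k _ => pow_nonneg hlam0 _)
          (summable_geometric_of_lt_one hlam0 hlam1)
      _ = (1 - lam)⁻¹ := tsum_geometric_of_lt_one hlam0 hlam1
  have hconv := conv_sum_bound lam hlam0 hlam1 T hT0 Tt hTb
  set Mtot : ℝ := (B : ℝ) * (α 0 * x 0 * (1 - lam)⁻¹ + 2 * (Tt / (1 - lam)) + 2 * Tt)
    with hMtot
  apply summable_of_sum_range_le (c := Mtot)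
    (fun n => mul_nonneg (hα0 _) (norm_nonneg _))
  intro N
  have hsub : Finset.range N ⊆ Finset.range (N * B) :=
    Finset.range_subset_range.mpr (Nat.le_mul_of_pos_right N hB1)
  have hTt0 : 0 ≤ Tt := tsum_nonneg fun t => mul_nonneg (hα0 _) (he0 _)
  calc ∑ n ∈ Finset.range N, α n * ‖θ i n - θ j n‖
      ≤ ∑ n ∈ Finset.range (N * B), α n * ‖θ i n - θ j n‖ := by
        apply Finset.sum_le_sum_of_subset_of_nonneg hsub
        intro n _ _
        exact mul_nonneg (hα0 _) (norm_nonneg _)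
    _ = ∑ k ∈ Finset.range N, ∑ r ∈ Finset.range B,
          α (k * B + r) * ‖θ i (k * B + r) - θ j (k * B + r)‖ :=
        sum_blocks _ B N
    _ ≤ ∑ k ∈ Finset.range N, ∑ _r ∈ Finset.range B,
          (α 0 * x 0 * lam ^ k + 2 * (∑ l ∈ Finset.range k, lam ^ (k - 1 - l) * T l)
            + 2 * T k) := by
        apply Finset.sum_le_sum
        intro k _
        apply Finset.sum_le_sum
        intro r hr
        exact hper k r (Finset.mem_range.mp hr)
    _ = (B : ℝ) * ∑ k ∈ Finset.range N,
          (α 0 * x 0 * lam ^ k + 2 * (∑ l ∈ Finset.range k, lam ^ (k - 1 - l) * T l)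
            + 2 * T k) := by
        rw [Finset.mul_sum]
        apply Finset.sum_congr rfl
        intro k _
        rw [Finset.sum_const, Finset.card_range, nsmul_eq_mul]
    _ ≤ Mtot := by
        rw [hMtot]
        have hsplit : ∑ k ∈ Finset.range N,
            (α 0 * x 0 * lam ^ k + 2 * (∑ l ∈ Finset.range k, lam ^ (k - 1 - l) * T l)
              + 2 * T k)
            = α 0 * x 0 * (∑ k ∈ Finset.range N, lam ^ k)
              + 2 * (∑ k ∈ Finset.range N, ∑ l ∈ Finset.range k, lam ^ (k - 1 - l) * T l)
              + 2 * ∑ k ∈ Finset.range N, T k := by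
          rw [Finset.sum_add_distrib, Finset.sum_add_distrib, Finset.mul_sum,
            Finset.mul_sum, Finset.mul_sum]
        rw [hsplit]
        have hB0 : (0 : ℝ) ≤ (B : ℝ) := Nat.cast_nonneg B
        have hx00 : 0 ≤ x 0 := by rw [hx]; exact hD0 (0 * B)
        have h1 : α 0 * x 0 * (∑ k ∈ Finset.range N, lam ^ k) ≤ α 0 * x 0 * (1 - lam)⁻¹ :=
          mul_le_mul_of_nonneg_left (hgeo N) (mul_nonneg (hα0 0) hx00)
        have h2 := hconv N
        have h3 := hTb N
        have hbody : α 0 * x 0 * (∑ k ∈ Finset.range N, lam ^ k)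
            + 2 * (∑ k ∈ Finset.range N, ∑ l ∈ Finset.range k, lam ^ (k - 1 - l) * T l)
            + 2 * ∑ k ∈ Finset.range N, T k
            ≤ α 0 * x 0 * (1 - lam)⁻¹ + 2 * (Tt / (1 - lam)) + 2 * Tt := by linarith
        exact mul_le_mul_of_nonneg_left hbody hB0
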